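/- Let m be a nonnegative integer such that the Fermat number F_m = 2^(2^m) + 1 is prime, let k be an odd positive integer divisible by F_m, and let r be a positive integer such that both (F_m − 1)·r + 1 and F_m·r + 1 are prime and neither of them divides k. Then n = (F_m − 1)·(F_m·r + 1)·k satisfies φ(n+k) = 2·φ(n), where φ denotes Euler's totient function. -/
import Mathlib


theorem fermat_prime_solution_odd_k_dvd
    (m k r : ℕ) (hF : Nat.Prime (2 ^ 2 ^ m + 1))
    (hk : 0 < k) (hko : Odd k) (hdvd : (2 ^ 2 ^ m + 1) ∣ k)
    (hr : 0 < r)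
    (hp1 : Nat.Prime (2 ^ 2 ^ m * r + 1))
    (hp2 : Nat.Prime ((2 ^ 2 ^ m + 1) * r + 1))
    (hnd1 : ¬ (2 ^ 2 ^ m * r + 1) ∣ k)
    (hnd2 : ¬ ((2 ^ 2 ^ m + 1) * r + 1) ∣ k) :
    Nat.totient (2 ^ 2 ^ m * ((2 ^ 2 ^ m + 1) * r + 1) * k + k) =
      2 * Nat.totient (2 ^ 2 ^ m * ((2 ^ 2 ^ m + 1) * r + 1) * k) := by
  set q := 2 ^ 2 ^ m with hq
  have hq2 : q = 2 * 2 ^ (2 ^ m - 1) := by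
    rw [hq, ← pow_succ']
    congr 1
    have : 1 ≤ 2 ^ m := Nat.one_le_two_pow
    omega
  -- rewrite n + k
  have hsplit : q * ((q + 1) * r + 1) * k + k = (q * r + 1) * ((q + 1) * k) := by ring
  -- coprimality for LHS
  have hc1 : Nat.Coprime (q * r + 1) ((q + 1) * k) := by
    apply Nat.Coprime.mul_right
    · rw [hp1.coprime_iff_not_dvd]
      intro h
      have := (Nat.prime_dvd_prime_iff_eq hp1 hF).mp h
      exact hnd1 (this ▸ hdvd)
    · rw [hp1.coprime_iff_not_dvd]; exact hnd1
  -- coprimality for RHS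
  have hqk : Nat.Coprime q k := by
    apply Nat.Coprime.pow_left
    rwa [Nat.coprime_two_left]
  have hc2 : Nat.Coprime ((q + 1) * r + 1) (q * k) := by
    apply Nat.Coprime.mul_right
    · rw [hp2.coprime_iff_not_dvd]
      intro h
      have h2 : (q + 1) * r + 1 = 2 := (Nat.prime_dvd_prime_iff_eq hp2 Nat.prime_two).mp
        (hp2.dvd_of_dvd_pow (by rwa [hq] at h))
      have hq1 : 1 ≤ q := Nat.one_le_two_pow
      nlinarith
    · rw [hp2.coprime_iff_not_dvd]; exact hnd2
  rw [hsplit, Nat.totient_mul hc1, Nat.totient_mul_of_prime_of_dvd hF hdvd,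
    Nat.totient_prime hp1, Nat.add_sub_cancel]
  have hrhs : q * ((q + 1) * r + 1) * k = ((q + 1) * r + 1) * (q * k) := by ring
  rw [hrhs, Nat.totient_mul hc2, Nat.totient_mul hqk, Nat.totient_prime hp2, Nat.add_sub_cancel]
  have htq : Nat.totient q = 2 ^ (2 ^ m - 1) := by
    rw [hq, Nat.totient_prime_pow Nat.prime_two Nat.one_le_two_pow]
    simp
  rw [htq]
  rw [hq2]
  ring
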